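/- (Motzkin–Straus) If G is a graph on n vertices whose largest clique has order t, then the maximum of λ(G, x) = Σ_{ij ∈ E(G)} x_i x_j over the standard simplex equals (1/2)(1 - 1/t). -/

import Mathlib

open Finset

def stdSimplex' (n : ℕ) : Set (Fin n → ℝ) :=
  {x | (∀ i, 0 ≤ x i) ∧ ∑ i, x i = 1}

set_option linter.unusedSectionVars false

lemma MS.pair_eq_pair_iff {α} [DecidableEq α] {a b c d : α} (hcd : c ≠ d) :
    ({a,b} : Finset α) = {c,d} ↔ (a=c∧b=d)∨(a=d∧b=c) := by
  constructor
  · intro h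
    have ha : a ∈ ({c,d} : Finset α) := h ▸ (by simp)
    have hb : b ∈ ({c,d} : Finset α) := h ▸ (by simp)
    have hc : c ∈ ({a,b} : Finset α) := h ▸ (by simp)
    have hd : d ∈ ({a,b} : Finset α) := h ▸ (by simp)
    simp at ha hb hc hd
    rcases ha with rfl|rfl <;> rcases hb with rfl|rfl <;> tauto
  · rintro (⟨rfl,rfl⟩|⟨rfl,rfl⟩)
    · rfl
    · exact Finset.pair_comm a b

section MS

variable {n : ℕ} (E : Finset (Finset (Fin n)))

/-- adjacency matrix -/
noncomputable def MS.A (a b : Fin n) : ℝ := if ({a,b} : Finset (Fin n)) ∈ E then 1 else 0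

/-- bilinear form -/
noncomputable def MS.B (x y : Fin n → ℝ) : ℝ := ∑ a, ∑ b, MS.A E a b * x a * y b

/-- shift direction vector -/
def MS.delta (i j : Fin n) : Fin n → ℝ := fun k => if k = i then 1 else if k = j then -1 else 0

variable (hE : ∀ e ∈ E, e.card = 2)
include hE

lemma MS.A_symm (a b : Fin n) : MS.A E a b = MS.A E b a := by
  simp [MS.A, Finset.pair_comm]

lemma MS.A_diag (a : Fin n) : MS.A E a a = 0 := by
  have h1 : ({a,a} : Finset (Fin n)) = {a} := by simp
  rw [MS.A, h1, if_neg]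
  intro h
  have := hE _ h
  simp at this

lemma MS.A_one {a b : Fin n} (h : ({a,b} : Finset (Fin n)) ∈ E) : MS.A E a b = 1 := if_pos h

lemma MS.A_zero {a b : Fin n} (h : ({a,b} : Finset (Fin n)) ∉ E) : MS.A E a b = 0 := if_neg h

omit hE

lemma MS.double_sum_pair (x : Fin n → ℝ) {a₀ b₀ : Fin n} (hne : a₀ ≠ b₀) :
    ∑ a, ∑ b, (if ({a,b} : Finset (Fin n)) = {a₀,b₀} then x a * x b else 0)
      = x a₀ * x b₀ + x b₀ * x a₀ := by
  have key : ∀ a b : Fin n, (if ({a,b} : Finset (Fin n)) = {a₀,b₀} then x a * x b else 0)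
      = (if a = a₀ ∧ b = b₀ then x a * x b else 0)
        + (if a = b₀ ∧ b = a₀ then x a * x b else 0) := by
    intro a b
    by_cases h : ({a,b} : Finset (Fin n)) = {a₀,b₀}
    · rw [if_pos h]
      rcases (MS.pair_eq_pair_iff hne).mp h with ⟨rfl,rfl⟩|⟨rfl,rfl⟩
      · rw [if_pos ⟨rfl, rfl⟩, if_neg (by rintro ⟨rfl, -⟩; exact hne rfl)]; ring
      · rw [if_neg (by rintro ⟨rfl, -⟩; exact hne rfl), if_pos ⟨rfl, rfl⟩]; ring
    · rw [if_neg h]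
      rw [if_neg (by rintro ⟨rfl, rfl⟩; exact h rfl),
        if_neg (by rintro ⟨rfl, rfl⟩; exact h (Finset.pair_comm _ _))]
      norm_num
  simp only [key, Finset.sum_add_distrib]
  simp [ite_and, Finset.sum_ite_eq']

include hE in
/-- B x x = 2 * edge sum -/
lemma MS.B_eq_two_mul (x : Fin n → ℝ) :
    MS.B E x x = 2 * ∑ e ∈ E, ∏ i ∈ e, x i := by
  have step0 : ∀ a b : Fin n, MS.A E a b * x a * x b
      = ∑ e ∈ E, (if ({a,b} : Finset (Fin n)) = e then x a * x b else 0) := by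
    intro a b
    rw [Finset.sum_ite_eq, MS.A]
    split_ifs <;> ring
  have step1 : MS.B E x x
      = ∑ e ∈ E, ∑ a, ∑ b, (if ({a,b} : Finset (Fin n)) = e then x a * x b else 0) := by
    rw [MS.B]
    calc ∑ a, ∑ b, MS.A E a b * x a * x b
        = ∑ a, ∑ b, ∑ e ∈ E, (if ({a,b} : Finset (Fin n)) = e then x a * x b else 0) := by
          exact Finset.sum_congr rfl fun a _ => Finset.sum_congr rfl fun b _ => step0 a b
      _ = ∑ a, ∑ e ∈ E, ∑ b, (if ({a,b} : Finset (Fin n)) = e then x a * x b else 0) :=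
          Finset.sum_congr rfl fun a _ => Finset.sum_comm
      _ = ∑ e ∈ E, ∑ a, ∑ b, (if ({a,b} : Finset (Fin n)) = e then x a * x b else 0) :=
          Finset.sum_comm
  rw [step1, Finset.mul_sum]
  refine Finset.sum_congr rfl fun e he => ?_
  obtain ⟨a₀, b₀, hne, rfl⟩ := Finset.card_eq_two.mp (hE e he)
  rw [MS.double_sum_pair x hne, Finset.prod_pair hne]
  ring

lemma MS.sum_delta {i j : Fin n} (hij : i ≠ j) (g : Fin n → ℝ) :
    ∑ b, g b * MS.delta i j b = g i - g j := by
  have key : ∀ b, g b * MS.delta i j b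
      = (if b = i then g i else 0) + (if b = j then -(g j) else 0) := by
    intro b
    unfold MS.delta
    by_cases hbi : b = i <;> by_cases hbj : b = j <;> simp_all
  simp only [key, Finset.sum_add_distrib]
  simp [Finset.sum_ite_eq']
  ring

lemma MS.B_expand (x d : Fin n → ℝ) (c : ℝ) :
    MS.B E (fun k => x k + c * d k) (fun k => x k + c * d k)
      = MS.B E x x + c * MS.B E x d + c * MS.B E d x + c * c * MS.B E d d := by
  simp only [MS.B, Finset.mul_sum]
  rw [← Finset.sum_add_distrib, ← Finset.sum_add_distrib, ← Finset.sum_add_distrib]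
  refine Finset.sum_congr rfl fun a _ => ?_
  rw [← Finset.sum_add_distrib, ← Finset.sum_add_distrib, ← Finset.sum_add_distrib]
  refine Finset.sum_congr rfl fun b _ => ?_
  ring

include hE in
lemma MS.B_symm (x y : Fin n → ℝ) : MS.B E x y = MS.B E y x := by
  rw [MS.B, MS.B, Finset.sum_comm]
  refine Finset.sum_congr rfl fun a _ => Finset.sum_congr rfl fun b _ => ?_
  rw [MS.A_symm E hE]
  ring

lemma MS.B_delta (x : Fin n → ℝ) {i j : Fin n} (hij : i ≠ j) :
    MS.B E x (MS.delta i j) = (∑ a, MS.A E a i * x a) - (∑ a, MS.A E a j * x a) := by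
  rw [MS.B]
  have h1 : ∀ a : Fin n, ∑ b, MS.A E a b * x a * MS.delta i j b
      = MS.A E a i * x a - MS.A E a j * x a :=
    fun a => MS.sum_delta hij (fun b => MS.A E a b * x a)
  rw [Finset.sum_congr rfl fun a _ => h1 a, Finset.sum_sub_distrib]

include hE in
lemma MS.B_delta_delta {i j : Fin n} (hij : i ≠ j)
    (hnadj : ({i,j} : Finset (Fin n)) ∉ E) :
    MS.B E (MS.delta i j) (MS.delta i j) = 0 := by
  rw [MS.B_delta E (MS.delta i j) hij]
  have h1 : (∑ a, MS.A E a i * MS.delta i j a) = MS.A E i i - MS.A E j i :=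
    MS.sum_delta hij (fun a => MS.A E a i)
  have h2 : (∑ a, MS.A E a j * MS.delta i j a) = MS.A E i j - MS.A E j j :=
    MS.sum_delta hij (fun a => MS.A E a j)
  have hji : ({j,i} : Finset (Fin n)) ∉ E := by rw [Finset.pair_comm]; exact hnadj
  rw [h1, h2, MS.A_diag E hE, MS.A_diag E hE, MS.A_zero E hE hnadj, MS.A_zero E hE hji]
  ring

include hE in
/-- main upper bound by induction on support size -/
lemma MS.bound (t : ℕ) (hmax : ∀ W : Finset (Fin n), W.powersetCard 2 ⊆ E → W.card ≤ t) :
    ∀ s : ℕ, ∀ x : Fin n → ℝ, (∀ i, 0 ≤ x i) → ∑ i, x i = 1 →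
      (Finset.univ.filter fun i => x i ≠ 0).card ≤ s → MS.B E x x ≤ 1 - 1/(t:ℝ) := by
  intro s
  induction s with
  | zero =>
    intro x hx0 hx1 hs
    exfalso
    have hz : ∀ i, x i = 0 := by
      intro i
      by_contra h
      have hi : i ∈ Finset.univ.filter (fun i => x i ≠ 0) := by simp [h]
      have := Finset.card_pos.mpr ⟨i, hi⟩
      omega
    rw [Finset.sum_congr rfl fun i _ => hz i] at hx1
    simp at hx1
  | succ s ih =>
    intro x hx0 hx1 hs
    set S := Finset.univ.filter (fun i => x i ≠ 0) with hS
    have hxzero : ∀ i ∉ S, x i = 0 := by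
      intro i hi
      by_contra h
      exact hi (by simp [hS, h])
    have hsumS : ∑ a ∈ S, x a = 1 := by
      rw [Finset.sum_subset (Finset.subset_univ S) (fun a _ ha => hxzero a ha)]
      exact hx1
    by_cases hclq : ∀ i ∈ S, ∀ j ∈ S, i ≠ j → ({i,j} : Finset (Fin n)) ∈ E
    · -- support is a clique
      have hsub : S.powersetCard 2 ⊆ E := by
        intro e he
        rw [Finset.mem_powersetCard] at he
        obtain ⟨hsubW, hcard⟩ := he
        obtain ⟨a, b, hab, rfl⟩ := Finset.card_eq_two.mp hcard
        exact hclq a (hsubW (by simp)) b (hsubW (by simp)) hab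
      have hcard_t : S.card ≤ t := hmax S hsub
      have hSne : S.Nonempty := by
        by_contra h
        rw [Finset.not_nonempty_iff_eq_empty] at h
        rw [h] at hsumS
        simp at hsumS
      have hScard_pos : 0 < S.card := Finset.card_pos.mpr hSne
      have ht_pos : 0 < t := lt_of_lt_of_le hScard_pos hcard_t
      have hrestrict : MS.B E x x = ∑ a ∈ S, ∑ b ∈ S, MS.A E a b * x a * x b := by
        rw [MS.B]
        rw [← Finset.sum_subset (Finset.subset_univ S)
          (fun a _ ha => by simp [hxzero a ha])]
        refine Finset.sum_congr rfl fun a _ => ?_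
        rw [← Finset.sum_subset (Finset.subset_univ S)
          (fun b _ hb => by simp [hxzero b hb])]
      have hterm : ∀ a ∈ S, ∀ b ∈ S, MS.A E a b * x a * x b
          = x a * x b - (if a = b then x a * x b else 0) := by
        intro a ha b hb
        by_cases hab : a = b
        · subst hab
          rw [MS.A_diag E hE, if_pos rfl]
          ring
        · rw [MS.A_one E hE (hclq a ha b hb hab), if_neg hab]
          ring
      have hval : MS.B E x x = 1 - ∑ a ∈ S, x a ^ 2 := by
        rw [hrestrict]
        rw [Finset.sum_congr rfl fun a ha =>
          Finset.sum_congr rfl fun b hb => hterm a ha b hb]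
        rw [Finset.sum_congr rfl fun a (ha : a ∈ S) => Finset.sum_sub_distrib _ _,
          Finset.sum_sub_distrib]
        have h1 : ∑ a ∈ S, ∑ b ∈ S, x a * x b = 1 := by
          rw [← Finset.sum_mul_sum, hsumS]
          norm_num
        have h2 : ∀ a ∈ S, (∑ b ∈ S, if a = b then x a * x b else 0) = x a ^ 2 := by
          intro a ha
          rw [Finset.sum_ite_eq, if_pos ha]
          ring
        rw [h1, Finset.sum_congr rfl h2]
      rw [hval]
      have hcs := sq_sum_le_card_mul_sum_sq (s := S) (f := x)
      rw [hsumS] at hcs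
      have hcard_pos' : (0:ℝ) < (S.card : ℝ) := by exact_mod_cast hScard_pos
      have ht_pos' : (0:ℝ) < (t:ℝ) := by exact_mod_cast ht_pos
      have h3 : (1:ℝ)/(S.card:ℝ) ≤ ∑ a ∈ S, x a ^ 2 := by
        rw [div_le_iff₀ hcard_pos']
        nlinarith [hcs]
      have h4 : (1:ℝ)/(t:ℝ) ≤ (1:ℝ)/(S.card:ℝ) := by
        apply one_div_le_one_div_of_le hcard_pos'
        exact_mod_cast hcard_t
      linarith
    · -- not a clique: shift weight
      push_neg at hclq
      obtain ⟨i, hiS, j, hjS, hij, hnadj⟩ := hclq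
      have main : ∀ i j : Fin n, i ∈ S → j ∈ S → i ≠ j → ({i,j} : Finset (Fin n)) ∉ E →
          (∑ a, MS.A E a j * x a) ≤ (∑ a, MS.A E a i * x a) → MS.B E x x ≤ 1 - 1/(t:ℝ) := by
        intro i j hiS hjS hij hnadj hLe
        set y := fun k => x k + x j * MS.delta i j k with hy
        have hy0 : ∀ k, 0 ≤ y k := by
          intro k
          rw [hy]
          simp only [MS.delta]
          by_cases hki : k = i
          · subst hki
            rw [if_pos rfl]
            have := hx0 k
            have := hx0 j
            nlinarith
          · rw [if_neg hki]
            by_cases hkj : k = j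
            · subst hkj
              rw [if_pos rfl]
              nlinarith [hx0 k]
            · rw [if_neg hkj]
              nlinarith [hx0 k]
        have hysum : ∑ k, y k = 1 := by
          rw [hy]
          rw [Finset.sum_add_distrib, hx1]
          have : ∑ k, x j * MS.delta i j k = x j * ∑ k, MS.delta i j k := by
            rw [Finset.mul_sum]
          rw [this]
          have hds : ∑ k, MS.delta i j k = 0 := by
            have := MS.sum_delta hij (fun _ => (1:ℝ))
            simp only [one_mul] at this
            rw [this]
            ring
          rw [hds]
          ring
        have hysupp : (Finset.univ.filter fun k => y k ≠ 0) ⊆ S.erase j := by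
          intro k hk
          simp only [Finset.mem_filter, Finset.mem_univ, true_and] at hk
          rw [Finset.mem_erase]
          constructor
          · intro hkj
            subst hkj
            apply hk
            rw [hy]
            simp [MS.delta, if_neg hij.symm]
          · by_cases hki : k = i
            · subst hki; exact hiS
            · by_cases hkj : k = j
              · subst hkj; exact hjS
              · rw [hS, Finset.mem_filter]
                refine ⟨Finset.mem_univ k, ?_⟩
                intro hxk
                apply hk
                rw [hy]
                simp [MS.delta, hki, hkj, hxk]
        have hycard : (Finset.univ.filter fun k => y k ≠ 0).card ≤ s := by
          have h1 := Finset.card_le_card hysupp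
          have h2 : (S.erase j).card = S.card - 1 := Finset.card_erase_of_mem hjS
          have h3 : 0 < S.card := Finset.card_pos.mpr ⟨j, hjS⟩
          omega
        have hBy := ih y hy0 hysum hycard
        have hshift : MS.B E y y = MS.B E x x
            + 2 * x j * ((∑ a, MS.A E a i * x a) - (∑ a, MS.A E a j * x a)) := by
          rw [hy]
          rw [MS.B_expand E x (MS.delta i j) (x j)]
          rw [MS.B_delta E x hij, MS.B_symm E hE (MS.delta i j) x, MS.B_delta E x hij,
            MS.B_delta_delta E hE hij hnadj]
          ring
        have hxj : 0 ≤ x j := hx0 j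
        nlinarith [hBy, hshift, hxj, hLe]
      rcases le_total (∑ a, MS.A E a j * x a) (∑ a, MS.A E a i * x a) with h | h
      · exact main i j hiS hjS hij hnadj h
      · refine main j i hjS hiS hij.symm ?_ h
        rw [Finset.pair_comm]
        exact hnadj

end MS

/-- Motzkin–Straus: a graph is given by its finset of 2-element edge sets;
a largest clique (set all of whose pairs are edges) has order `t`. -/
theorem stmt_1 (n t : ℕ) (hn : 1 ≤ n) (E : Finset (Finset (Fin n)))
    (hE : ∀ e ∈ E, e.card = 2)
    (hcl : ∃ W : Finset (Fin n), W.card = t ∧ W.powersetCard 2 ⊆ E)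
    (hmax : ∀ W : Finset (Fin n), W.powersetCard 2 ⊆ E → W.card ≤ t) :
    IsGreatest {y : ℝ | ∃ x ∈ stdSimplex' n, y = ∑ e ∈ E, ∏ i ∈ e, x i}
      (1 / 2 * (1 - 1 / (t : ℝ))) := by
  obtain ⟨W, hWcard, hWsub⟩ := hcl
  have ht1 : 1 ≤ t := by
    have h0 : ({(⟨0, hn⟩ : Fin n)} : Finset (Fin n)).powersetCard 2 ⊆ E := by
      intro e he
      rw [Finset.mem_powersetCard] at he
      obtain ⟨hsub, hcard⟩ := he
      have := Finset.card_le_card hsub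
      simp at this
      omega
    have := hmax _ h0
    simpa using this
  have ht0 : (t:ℝ) ≠ 0 := by
    have : (0:ℝ) < t := by exact_mod_cast ht1
    linarith
  have ht0' : (0:ℝ) < (t:ℝ) := by exact_mod_cast ht1
  constructor
  · -- membership: uniform distribution on the clique W
    set x : Fin n → ℝ := fun i => if i ∈ W then (t:ℝ)⁻¹ else 0 with hx
    refine ⟨x, ⟨?_, ?_⟩, ?_⟩
    · intro i
      have hpos : (0:ℝ) ≤ (t:ℝ)⁻¹ := by positivity
      by_cases hiW : i ∈ W
      · simpa [hx, hiW] using hpos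
      · simp [hx, hiW]
    · rw [hx]
      have : ∑ i, (if i ∈ W then (t:ℝ)⁻¹ else 0) = ∑ i ∈ W, (t:ℝ)⁻¹ := by
        rw [Finset.sum_ite_mem]
        congr 1
        simp
      rw [this, Finset.sum_const, hWcard, nsmul_eq_mul]
      field_simp
    · -- value computation
      have hstep : ∑ e ∈ E, ∏ i ∈ e, x i = ∑ e ∈ W.powersetCard 2, ∏ i ∈ e, x i := by
        rw [Finset.sum_subset hWsub]
        intro e heE hePW
        have hecard := hE e heE
        have hnotsub : ¬ e ⊆ W := by
          intro hsub
          exact hePW (Finset.mem_powersetCard.mpr ⟨hsub, hecard⟩)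
        obtain ⟨i, hie, hiW⟩ := Finset.not_subset.mp hnotsub
        refine Finset.prod_eq_zero hie ?_
        rw [hx]
        simp [hiW]
      rw [hstep]
      have hval : ∀ e ∈ W.powersetCard 2, ∏ i ∈ e, x i = (t:ℝ)⁻¹ ^ 2 := by
        intro e he
        rw [Finset.mem_powersetCard] at he
        obtain ⟨hsub, hcard⟩ := he
        have : ∀ i ∈ e, x i = (t:ℝ)⁻¹ := by
          intro i hie
          rw [hx]
          simp [hsub hie]
        rw [Finset.prod_congr rfl this, Finset.prod_const, hcard]
      rw [Finset.sum_congr rfl hval, Finset.sum_const, Finset.card_powersetCard, hWcard,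
        nsmul_eq_mul, Nat.cast_choose_two]
      field_simp
  · -- upper bound
    rintro y ⟨x, ⟨hx0, hx1⟩, rfl⟩
    have hb := MS.bound E hE t hmax n x hx0 hx1 (by
      calc (Finset.univ.filter fun i => x i ≠ 0).card ≤ Finset.univ.card :=
            Finset.card_filter_le _ _
        _ = n := by simp)
    have h2 := MS.B_eq_two_mul E hE x
    linarith
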